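/- Let G be a finite simple bipartite Δ-regular graph whose girth (length of its shortest cycle) is g, with g ≥ 4 finite, and let C(G) be a graph code of G over a finite field 𝔽_q (defined by nonzero coefficients a(v,e) at each vertex-incident-edge pair). Then the minimum distance of C(G) is at least g; equivalently, every nonzero codeword x ∈ C(G) is nonzero on at least g edges. -/

import Mathlib

open Finset

/-- Auxiliary: a finite graph in which every vertex with a neighbour has a second
neighbour, and which has at least one edge, contains a cycle. -/
lemma aux_exists_cycle {V : Type*} [Fintype V] [DecidableEq V] (H : SimpleGraph V)
    {u₀ v₀ : V} (h₀ : H.Adj u₀ v₀)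
    (hdeg : ∀ ⦃u w : V⦄, H.Adj u w → ∃ w', H.Adj u w' ∧ w' ≠ w) :
    ∃ (v : V) (c : H.Walk v v), c.IsCycle := by
  by_contra hA
  push_neg at hA
  have key : ∀ n, ∃ (u v : V) (p : H.Walk u v), p.IsPath ∧ n ≤ p.length := by
    intro n
    induction n with
    | zero => exact ⟨u₀, u₀, .nil, SimpleGraph.Walk.IsPath.nil, Nat.zero_le _⟩
    | succ n ih =>
      obtain ⟨u, v, p, hp, hn⟩ := ih
      cases p with
      | nil =>
        refine ⟨u₀, v₀, .cons h₀ .nil, ?_, ?_⟩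
        · rw [SimpleGraph.Walk.cons_isPath_iff]
          simpa using h₀.ne
        · simp only [SimpleGraph.Walk.length_nil] at hn
          simp only [SimpleGraph.Walk.length_cons, SimpleGraph.Walk.length_nil]
          omega
      | @cons _ b _ h' p' =>
        obtain ⟨w, hw, hwb⟩ := hdeg h'
        by_cases hmem : w ∈ (SimpleGraph.Walk.cons h' p').support
        · exfalso
          have hq : ((SimpleGraph.Walk.cons h' p').takeUntil w hmem).IsPath :=
            hp.takeUntil hmem
          have hc : (SimpleGraph.Walk.cons hw.symm
              ((SimpleGraph.Walk.cons h' p').takeUntil w hmem)).IsCycle := by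
            rw [SimpleGraph.Walk.cons_isCycle_iff]
            refine ⟨hq, fun he => ?_⟩
            have hmem2 : s(w, u) ∈ (SimpleGraph.Walk.cons h' p').edges :=
              SimpleGraph.Walk.edges_takeUntil_subset _ hmem he
            rw [SimpleGraph.Walk.edges_cons] at hmem2
            rcases List.mem_cons.mp hmem2 with h1 | h2
            · rw [Sym2.eq_iff] at h1
              rcases h1 with ⟨h1a, _⟩ | ⟨h1a, _⟩
              · exact hw.ne' h1a
              · exact hwb h1a
            · have : u ∈ p'.support := by
                rw [Sym2.eq_swap] at h2
                exact SimpleGraph.Walk.fst_mem_support_of_mem_edges _ h2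
              rw [SimpleGraph.Walk.cons_isPath_iff] at hp
              exact hp.2 this
          exact hA _ _ hc
        · refine ⟨w, v, .cons hw.symm (.cons h' p'), ?_, ?_⟩
          · rw [SimpleGraph.Walk.cons_isPath_iff]
            exact ⟨hp, hmem⟩
          · simp only [SimpleGraph.Walk.length_cons] at hn ⊢
            omega
  obtain ⟨u, v, p, hp, hn⟩ := key (Fintype.card V)
  exact absurd hp.length_lt (by omega)

/-- The support graph of a codeword: edges of `G` on which `x` is nonzero. -/
def supGraph {V : Type*} [Fintype V] [DecidableEq V] (G : SimpleGraph V)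
    [DecidableRel G.Adj] {F : Type*} [Zero F] (x : G.edgeFinset → F) : SimpleGraph V where
  Adj u w := ∃ e : G.edgeFinset, (e : Sym2 V) = s(u, w) ∧ x e ≠ 0
  symm := by
    constructor
    rintro u w ⟨e, h1, h2⟩
    exact ⟨e, by rw [h1, Sym2.eq_swap], h2⟩
  loopless := by
    constructor
    rintro v ⟨e, h1, h2⟩
    have he : (e : Sym2 V) ∈ G.edgeSet := SimpleGraph.mem_edgeFinset.mp e.2
    rw [h1, SimpleGraph.mem_edgeSet] at he
    exact G.irrefl he

/-- a graph code of a finite simple bipartite `Δ`-regular graph with finite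
girth `g ≥ 4` has minimum distance at least `g`: every nonzero codeword is nonzero on at
least `g` edges. -/
theorem stmt_8 {V : Type*} [Fintype V] [DecidableEq V]
    (G : SimpleGraph V) [DecidableRel G.Adj]
    (hbip : G.Colorable 2)
    (Δ : ℕ) (hreg : G.IsRegularOfDegree Δ)
    (g : ℕ) (hg : 4 ≤ g) (hgirth : G.girth = g)
    (F : Type*) [Field F] [Fintype F] [DecidableEq F]
    (a : V → Sym2 V → F) (ha : ∀ v : V, ∀ e ∈ G.incidenceSet v, a v e ≠ 0)
    (Code : Set (G.edgeFinset → F))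
    (hCode : Code = {x | ∀ v : V,
      ∑ e : G.edgeFinset, (if v ∈ (e : Sym2 V) then a v (e : Sym2 V) * x e else 0) = 0}) :
    ∀ x ∈ Code, x ≠ 0 → g ≤ hammingNorm x := by
  subst hCode
  intro x hx hx0
  have hxC : ∀ v : V,
      ∑ e : G.edgeFinset, (if v ∈ (e : Sym2 V) then a v (e : Sym2 V) * x e else 0) = 0 := hx
  set H : SimpleGraph V := supGraph G x with hH
  -- the incidence count at every vertex is not one
  have hT : ∀ v : V,
      #(univ.filter fun e : G.edgeFinset => v ∈ (e : Sym2 V) ∧ x e ≠ 0) ≠ 1 := by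
    intro v h1
    obtain ⟨e0, he0⟩ := Finset.card_eq_one.mp h1
    have he0' : v ∈ (e0 : Sym2 V) ∧ x e0 ≠ 0 := by
      have : e0 ∈ univ.filter fun e : G.edgeFinset => v ∈ (e : Sym2 V) ∧ x e ≠ 0 := by
        rw [he0]; exact Finset.mem_singleton_self e0
      simpa using this
    have hsum := hxC v
    rw [← Finset.sum_filter] at hsum
    have hsub : (univ.filter fun e : G.edgeFinset => v ∈ (e : Sym2 V) ∧ x e ≠ 0) ⊆
        (univ.filter fun e : G.edgeFinset => v ∈ (e : Sym2 V)) := by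
      intro e he
      simp only [Finset.mem_filter] at he ⊢
      exact ⟨he.1, he.2.1⟩
    have hzero : ∀ e ∈ (univ.filter fun e : G.edgeFinset => v ∈ (e : Sym2 V)),
        e ∉ (univ.filter fun e : G.edgeFinset => v ∈ (e : Sym2 V) ∧ x e ≠ 0) →
        a v (e : Sym2 V) * x e = 0 := by
      intro e he hne
      simp only [Finset.mem_filter, Finset.mem_univ, true_and, not_and, not_not] at he hne
      rw [hne he, mul_zero]
    rw [← Finset.sum_subset hsub hzero, he0, Finset.sum_singleton] at hsum
    have hainc : a v (e0 : Sym2 V) ≠ 0 := by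
      apply ha v
      exact ⟨SimpleGraph.mem_edgeFinset.mp e0.2, he0'.1⟩
    exact (mul_ne_zero hainc he0'.2) hsum
  -- every vertex with a neighbour in H has another neighbour
  have hdeg : ∀ ⦃u w : V⦄, H.Adj u w → ∃ w', H.Adj u w' ∧ w' ≠ w := by
    rintro u w ⟨e, he, hxe⟩
    have hmem : e ∈ univ.filter fun e : G.edgeFinset => u ∈ (e : Sym2 V) ∧ x e ≠ 0 := by
      simp only [Finset.mem_filter, Finset.mem_univ, true_and]
      exact ⟨by rw [he]; exact Sym2.mem_mk_left u w, hxe⟩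
    have hcard : 1 < #(univ.filter fun e : G.edgeFinset => u ∈ (e : Sym2 V) ∧ x e ≠ 0) := by
      rcases Nat.lt_or_ge 1 _ with h | h
      · exact h
      · exfalso
        interval_cases h' : #(univ.filter fun e : G.edgeFinset => u ∈ (e : Sym2 V) ∧ x e ≠ 0)
        · rw [Finset.card_eq_zero] at h'
          rw [h'] at hmem
          exact absurd hmem (Finset.notMem_empty e)
        · exact hT u h'
    obtain ⟨e', he'mem, he'ne⟩ := Finset.exists_mem_ne hcard e
    simp only [Finset.mem_filter, Finset.mem_univ, true_and] at he'mem
    obtain ⟨w', hw'⟩ := Sym2.mem_iff_exists.mp he'mem.1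
    refine ⟨w', ⟨e', hw', he'mem.2⟩, fun hww => ?_⟩
    apply he'ne
    apply Subtype.ext
    rw [hw', hww, ← he]
  -- H has an edge
  obtain ⟨e1, hxe1⟩ : ∃ e : G.edgeFinset, x e ≠ 0 := by
    by_contra hc
    push_neg at hc
    exact hx0 (funext fun e => hc e)
  obtain ⟨u1, w1, he1⟩ : ∃ u w : V, (e1 : Sym2 V) = s(u, w) := by
    have : ∃ z : Sym2 V, z = (e1 : Sym2 V) := ⟨_, rfl⟩
    rw [Sym2.exists] at this
    obtain ⟨u, w, h⟩ := this
    exact ⟨u, w, h.symm⟩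
  have hadj1 : H.Adj u1 w1 := ⟨e1, he1, hxe1⟩
  -- get a cycle in H
  obtain ⟨v, c, hc⟩ := aux_exists_cycle H hadj1 hdeg
  have hle : H ≤ G := by
    rintro u w ⟨e, he, -⟩
    have : (e : Sym2 V) ∈ G.edgeSet := SimpleGraph.mem_edgeFinset.mp e.2
    rwa [he, SimpleGraph.mem_edgeSet] at this
  -- g ≤ length of the cycle
  have hgirthle : g ≤ c.length := by
    have hac : ¬ G.IsAcyclic := by
      intro h
      rw [← SimpleGraph.girth_eq_zero, hgirth] at h
      omega
    have hetop : G.egirth ≠ ⊤ := fun h => hac (SimpleGraph.egirth_eq_top.mp h)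
    have hcast : (g : ℕ∞) = G.egirth := by
      rw [← hgirth, SimpleGraph.girth, ENat.coe_toNat hetop]
    have hG : ((g : ℕ∞)) ≤ ((c.mapLe hle).length : ℕ∞) := by
      rw [hcast]
      exact SimpleGraph.le_egirth.mp le_rfl _ _ (hc.mapLe hle)
    have hlen : (c.mapLe hle).length = c.length := by
      simp [SimpleGraph.Walk.mapLe]
    rw [hlen] at hG
    exact_mod_cast hG
  -- the cycle has at least c.length edges in the support of x
  have hnodup : c.edges.Nodup := hc.isTrail.edges_nodup
  have hcard : c.edges.toFinset.card = c.length := by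
    rw [List.toFinset_card_of_nodup hnodup, SimpleGraph.Walk.length_edges]
  have hsub : c.edges.toFinset ⊆
      (univ.filter fun e : G.edgeFinset => x e ≠ 0).image (fun e : G.edgeFinset => (e : Sym2 V)) := by
    intro e he
    rw [List.mem_toFinset] at he
    have heH : e ∈ H.edgeSet := c.edges_subset_edgeSet he
    obtain ⟨u, w, hew⟩ : ∃ u w : V, e = s(u, w) := by
      have : ∃ z : Sym2 V, z = e := ⟨_, rfl⟩
      rw [Sym2.exists] at this
      obtain ⟨u, w, h⟩ := this
      exact ⟨u, w, h.symm⟩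
    rw [hew, SimpleGraph.mem_edgeSet] at heH
    obtain ⟨e', he', hxe'⟩ := heH
    rw [Finset.mem_image]
    exact ⟨e', Finset.mem_filter.mpr ⟨Finset.mem_univ _, hxe'⟩, by rw [he', ← hew]⟩
  have hineq : c.edges.toFinset.card ≤ hammingNorm x := by
    calc c.edges.toFinset.card
        ≤ ((univ.filter fun e : G.edgeFinset => x e ≠ 0).image
            (fun e : G.edgeFinset => (e : Sym2 V))).card := Finset.card_le_card hsub
      _ ≤ (univ.filter fun e : G.edgeFinset => x e ≠ 0).card := Finset.card_image_le
      _ = hammingNorm x := rfl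
  omega
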